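/- One-step descent for normalized averaged updates: let f : ℝ^d → ℝ be differentiable and L-smooth, let z_1,…,z_n ∈ ℝ^d be nonzero with average z̄ := (1/n)∑_i z_i, let x̄ ∈ ℝ^d, η ≥ 0, and set x̄⁺ := x̄ − (η/n)·∑_{i=1}^n z_i/‖z_i‖. Then f(x̄⁺) − f(x̄) ≤ −η·‖∇f(x̄)‖ + 2η·‖z̄ − ∇f(x̄)‖ + (η/n)·∑_{i=1}^n ‖z_i − z̄‖ + η²·L/2. -/

import Mathlib

open Finset

lemma descent_step {d : ℕ} (f : EuclideanSpace ℝ (Fin d) → ℝ) (L : ℝ)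
    (hdiff : ∀ x, DifferentiableAt ℝ f x)
    (hsmooth : ∀ x y, ‖gradient f x - gradient f y‖ ≤ L * ‖x - y‖)
    (x v : EuclideanSpace ℝ (Fin d)) :
    f (x + v) ≤ f x + inner ℝ (gradient f x) v + L * ‖v‖ ^ 2 / 2 := by
  have hφ : ∀ t : ℝ, HasDerivAt (fun t : ℝ => f (x + t • v))
      (inner ℝ (gradient f (x + t • v)) v : ℝ) t := by
    intro t
    have h1 : HasDerivAt (fun t : ℝ => x + t • v) v t := by
      simpa using ((hasDerivAt_id t).smul_const v).const_add x
    have h2 : HasFDerivAt f ((InnerProductSpace.toDual ℝ _) (gradient f (x + t • v)))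
        (x + t • v) :=
      hasGradientAt_iff_hasFDerivAt.mp (hdiff _).hasGradientAt
    exact h2.comp_hasDerivAt t h1
  set ψ : ℝ → ℝ := fun t => f (x + t • v) - t * inner ℝ (gradient f x) v
      - L * ‖v‖ ^ 2 * t ^ 2 / 2 with hψdef
  have hψ : ∀ t : ℝ, HasDerivAt ψ
      ((inner ℝ (gradient f (x + t • v)) v : ℝ) - inner ℝ (gradient f x) v
        - L * ‖v‖ ^ 2 * t) t := by
    intro t
    have h3 : HasDerivAt (fun t : ℝ => L * ‖v‖ ^ 2 * t ^ 2 / 2)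
        (L * ‖v‖ ^ 2 * t) t := by
      have := ((hasDerivAt_pow 2 t).const_mul (L * ‖v‖ ^ 2)).div_const 2
      refine this.congr_deriv ?_
      push_cast
      ring
    exact ((hφ t).sub (hasDerivAt_mul_const _)).sub h3
  have hanti : AntitoneOn ψ (Set.Icc 0 1) := by
    apply antitoneOn_of_deriv_nonpos (convex_Icc 0 1)
    · exact fun t _ => (hψ t).continuousAt.continuousWithinAt
    · exact fun t _ => (hψ t).differentiableAt.differentiableWithinAt
    · intro t ht
      rw [interior_Icc] at ht
      rw [(hψ t).deriv]
      have h1 : (inner ℝ (gradient f (x + t • v) - gradient f x) v : ℝ)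
          ≤ ‖gradient f (x + t • v) - gradient f x‖ * ‖v‖ := real_inner_le_norm _ _
      have h2 : ‖gradient f (x + t • v) - gradient f x‖ ≤ L * (t * ‖v‖) := by
        have := hsmooth (x + t • v) x
        simpa [norm_smul, abs_of_pos ht.1] using this
      rw [inner_sub_left] at h1
      nlinarith [norm_nonneg v, norm_nonneg (gradient f (x + t • v) - gradient f x), ht.1.le]
  have := hanti (Set.left_mem_Icc.mpr zero_le_one) (Set.right_mem_Icc.mpr zero_le_one)
    zero_le_one
  simp only [hψdef, one_smul, zero_smul, add_zero, one_mul, one_pow, zero_pow, mul_zero,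
    mul_one, zero_div, sub_zero, zero_mul] at this
  linarith

/-- **One-step descent for normalized averaged updates.** For an `L`-smooth `f`,
nonzero `z_1,…,z_n` with average `z̄`, and `x̄⁺ := x̄ − (η/n)∑ z_i/‖z_i‖`,
`f(x̄⁺) − f(x̄) ≤ −η‖∇f(x̄)‖ + 2η‖z̄ − ∇f(x̄)‖ + (η/n)∑‖z_i − z̄‖ + η²L/2`. -/
theorem normalized_one_step_descent
    (d n : ℕ) (hn : 0 < n)
    (f : EuclideanSpace ℝ (Fin d) → ℝ) (L : ℝ)
    (hdiff : ∀ x, DifferentiableAt ℝ f x)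
    (hsmooth : ∀ x y, ‖gradient f x - gradient f y‖ ≤ L * ‖x - y‖)
    (z : Fin n → EuclideanSpace ℝ (Fin d)) (hz : ∀ i, z i ≠ 0)
    (xbar : EuclideanSpace ℝ (Fin d)) (η : ℝ) (hη : 0 ≤ η) :
    f (xbar - (η / n) • ∑ i, ‖z i‖⁻¹ • z i) - f xbar
      ≤ -η * ‖gradient f xbar‖
        + 2 * η * ‖(n : ℝ)⁻¹ • (∑ i, z i) - gradient f xbar‖
        + (η / n) * ∑ i, ‖z i - (n : ℝ)⁻¹ • ∑ j, z j‖
        + η ^ 2 * L / 2 := by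
  -- dimension 0 is impossible since some z i must be nonzero
  rcases Nat.eq_zero_or_pos d with hd | hd
  · subst hd
    exact absurd (by ext i; exact i.elim0 : z ⟨0, hn⟩ = 0) (hz _)
  -- L is nonnegative
  have hL : 0 ≤ L := by
    have h1 := hsmooth (EuclideanSpace.single (⟨0, hd⟩ : Fin d) (1 : ℝ)) 0
    have h2 : ‖(EuclideanSpace.single (⟨0, hd⟩ : Fin d) (1 : ℝ)) - 0‖ = 1 := by
      simp [EuclideanSpace.norm_single]
    rw [h2, mul_one] at h1
    exact le_trans (norm_nonneg _) h1
  have hn' : (0 : ℝ) < n := by exact_mod_cast hn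
  set g := gradient f xbar with hg
  set zb : EuclideanSpace ℝ (Fin d) := (n : ℝ)⁻¹ • ∑ i, z i with hzb
  set v : EuclideanSpace ℝ (Fin d) := -((η / n) • ∑ i, ‖z i‖⁻¹ • z i) with hv
  have hxplus : xbar - (η / n) • ∑ i, ‖z i‖⁻¹ • z i = xbar + v := by
    rw [hv, sub_eq_add_neg]
  have hunit : ∀ i, ‖(‖z i‖⁻¹ • z i : EuclideanSpace ℝ (Fin d))‖ = 1 := by
    intro i
    rw [norm_smul, norm_inv, norm_norm, inv_mul_cancel₀ (norm_ne_zero_iff.mpr (hz i))]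
  -- key per-index bound
  have key : ∀ i, ‖z i‖ - ‖z i - zb‖ - ‖zb - g‖
      ≤ (inner ℝ g (‖z i‖⁻¹ • z i) : ℝ) := by
    intro i
    have e : g = z i + (zb - z i) + (g - zb) := by abel
    have h1 : (inner ℝ (z i) (‖z i‖⁻¹ • z i) : ℝ) = ‖z i‖ := by
      rw [real_inner_smul_right, real_inner_self_eq_norm_sq]
      field_simp [norm_ne_zero_iff.mpr (hz i)]
    have h2 : -‖z i - zb‖ ≤ (inner ℝ (zb - z i) (‖z i‖⁻¹ • z i) : ℝ) := by
      have := abs_real_inner_le_norm (zb - z i) (‖z i‖⁻¹ • z i)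
      rw [hunit i, mul_one] at this
      have h := neg_abs_le (inner ℝ (zb - z i) (‖z i‖⁻¹ • z i) : ℝ)
      have : -‖zb - z i‖ ≤ (inner ℝ (zb - z i) (‖z i‖⁻¹ • z i) : ℝ) := by linarith
      rwa [norm_sub_rev] at this
    have h3 : -‖zb - g‖ ≤ (inner ℝ (g - zb) (‖z i‖⁻¹ • z i) : ℝ) := by
      have := abs_real_inner_le_norm (g - zb) (‖z i‖⁻¹ • z i)
      rw [hunit i, mul_one] at this
      have h := neg_abs_le (inner ℝ (g - zb) (‖z i‖⁻¹ • z i) : ℝ)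
      have : -‖g - zb‖ ≤ (inner ℝ (g - zb) (‖z i‖⁻¹ • z i) : ℝ) := by linarith
      rwa [norm_sub_rev] at this
    calc ‖z i‖ - ‖z i - zb‖ - ‖zb - g‖
        ≤ (inner ℝ (z i) (‖z i‖⁻¹ • z i) : ℝ) + inner ℝ (zb - z i) (‖z i‖⁻¹ • z i)
          + inner ℝ (g - zb) (‖z i‖⁻¹ • z i) := by rw [h1]; linarith
      _ = (inner ℝ g (‖z i‖⁻¹ • z i) : ℝ) := by
          rw [← inner_add_left, ← inner_add_left, ← e]
  set S : ℝ := ∑ i, (inner ℝ g (‖z i‖⁻¹ • z i) : ℝ) with hS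
  set T : ℝ := ∑ i, ‖z i - zb‖ with hT
  -- sum bound
  have hsum : (n : ℝ) * ‖g‖ - 2 * n * ‖zb - g‖ - T ≤ S := by
    have h1 : ∑ i, (‖z i‖ - ‖z i - zb‖ - ‖zb - g‖) ≤ S :=
      Finset.sum_le_sum fun i _ => key i
    rw [Finset.sum_sub_distrib, Finset.sum_sub_distrib, Finset.sum_const,
      Finset.card_univ, Fintype.card_fin, nsmul_eq_mul] at h1
    have h2 : ‖∑ i, z i‖ ≤ ∑ i, ‖z i‖ := norm_sum_le _ _
    have h3 : ‖∑ i, z i‖ = (n : ℝ) * ‖zb‖ := by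
      rw [hzb, norm_smul, norm_inv, Real.norm_natCast]
      field_simp
    have h4 : ‖g‖ - ‖zb - g‖ ≤ ‖zb‖ := by
      have := norm_sub_norm_le g zb
      have h5 : ‖g - zb‖ = ‖zb - g‖ := norm_sub_rev _ _
      linarith
    nlinarith
  -- inner product with v
  have hinner : (inner ℝ g v : ℝ) = -((η / n) * S) := by
    rw [hv, inner_neg_right, real_inner_smul_right, inner_sum]
  have hinnerle : (inner ℝ g v : ℝ)
      ≤ -η * ‖g‖ + 2 * η * ‖zb - g‖ + (η / n) * T := by
    rw [hinner]
    have h1 : (η / n) * ((n : ℝ) * ‖g‖ - 2 * n * ‖zb - g‖ - T) ≤ (η / n) * S :=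
      mul_le_mul_of_nonneg_left hsum (div_nonneg hη hn'.le)
    have h2 : (η / n) * ((n : ℝ) * ‖g‖ - 2 * n * ‖zb - g‖ - T)
        = η * ‖g‖ - 2 * η * ‖zb - g‖ - (η / n) * T := by
      field_simp
    linarith
  -- norm of v
  have hvnorm : ‖v‖ ≤ η := by
    rw [hv, norm_neg, norm_smul]
    have h1 : ‖∑ i, ‖z i‖⁻¹ • z i‖ ≤ (n : ℝ) := by
      calc ‖∑ i, ‖z i‖⁻¹ • z i‖ ≤ ∑ i, ‖(‖z i‖⁻¹ • z i : EuclideanSpace ℝ (Fin d))‖ :=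
            norm_sum_le _ _
        _ = (n : ℝ) := by simp [hunit]
    have h2 : ‖η / (n : ℝ)‖ = η / n := by
      rw [Real.norm_eq_abs, abs_of_nonneg (div_nonneg hη hn'.le)]
    rw [h2]
    calc (η / n) * ‖∑ i, ‖z i‖⁻¹ • z i‖ ≤ (η / n) * n :=
          mul_le_mul_of_nonneg_left h1 (div_nonneg hη hn'.le)
      _ = η := by field_simp
  have hquad : L * ‖v‖ ^ 2 / 2 ≤ η ^ 2 * L / 2 := by
    have : ‖v‖ ^ 2 ≤ η ^ 2 := by nlinarith [norm_nonneg v]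
    nlinarith
  have hdesc := descent_step f L hdiff hsmooth xbar v
  rw [hxplus]
  linarith
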